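/- The image ρ₀(ker ρ_F) equals the set of even permutations lying in the subgroup of S₁₂ generated by the six pairwise commuting transpositions aᵢ = (i, i+6) for i = 1,…,6; in particular ρ₀(ker ρ_F) is an elementary abelian 2-group of order 2⁵ = 32. -/

import Mathlib

set_option maxRecDepth 100000


open Equiv

/-- σ₀ = (1 2 3 7 8 9)(6 12); the point 12 is represented by `0 : Fin 12`. -/
def σ₀ : Equiv.Perm (Fin 12) := c[1, 2, 3, 7, 8, 9] * c[6, 0]

/-- σ₁ = (1 2 3 7 8 9)(4 10). -/
def σ₁ : Equiv.Perm (Fin 12) := c[1, 2, 3, 7, 8, 9] * c[4, 10]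

/-- σ₂ = (1 2 3 7 8 9)(5 11). -/
def σ₂ : Equiv.Perm (Fin 12) := c[1, 2, 3, 7, 8, 9] * c[5, 11]

/-- τ = (1 4)(2 5)(7 10)(8 11)(3 6 9 12); the point 12 is represented by `0 : Fin 12`. -/
def τ : Equiv.Perm (Fin 12) := c[1, 4] * c[2, 5] * c[7, 10] * c[8, 11] * c[3, 6, 9, 0]

def σ : Fin 3 → Equiv.Perm (Fin 12) := ![σ₀, σ₁, σ₂]

/-- The generator x of the free group F₂. -/
def x : FreeGroup (Fin 2) := FreeGroup.of 0

/-- The generator y of the free group F₂. -/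
def y : FreeGroup (Fin 2) := FreeGroup.of 1

/-- ρᵢ : F₂ → S₁₂ is determined by ρᵢ(x) = σᵢ and ρᵢ(y) = τ. -/
def ρ (i : Fin 3) : FreeGroup (Fin 2) →* Equiv.Perm (Fin 12) := FreeGroup.lift ![σ i, τ]

/-- ρ_F : F₂ → S₆ is determined by ρ_F(x) = (1 2 3) and ρ_F(y) = (1 4)(2 5)(3 6);
the points 1,…,6 are represented by 0,…,5 in `Fin 6`. -/
def ρF : FreeGroup (Fin 2) →* Equiv.Perm (Fin 6) :=
  FreeGroup.lift ![c[0, 1, 2], c[0, 3] * c[1, 4] * c[2, 5]]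

/-- The six pairwise commuting transpositions aᵢ = (i, i+6), i = 1,…,6
(the point 12 being represented by `0 : Fin 12`). -/
def A : Set (Equiv.Perm (Fin 12)) :=
  {Equiv.swap 1 7, Equiv.swap 2 8, Equiv.swap 3 9,
    Equiv.swap 4 10, Equiv.swap 5 11, Equiv.swap 6 0}

/-- ρ₀(ker ρ_F) is exactly the set of even permutations in the subgroup generated by the
aᵢ's; in particular it is an elementary abelian 2-group of order 2⁵ = 32. -/
/- ### auxiliary definitions and lemmas -/

def bl : Fin 12 → Fin 6 := ![5,0,1,2,3,4,5,0,1,2,3,4]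
def fl : Fin 12 → Fin 12 := fun i => i + 6
def rr : Fin 6 → Fin 12 := ![1,2,3,4,5,6]
def a : Fin 6 → Equiv.Perm (Fin 12) :=
  ![Equiv.swap 1 7, Equiv.swap 2 8, Equiv.swap 3 9, Equiv.swap 4 10, Equiv.swap 5 11, Equiv.swap 6 0]
def e (c : Fin 6 → Bool) : Equiv.Perm (Fin 12) :=
  (if c 0 then a 0 else 1) * (if c 1 then a 1 else 1) * (if c 2 then a 2 else 1) *
    (if c 3 then a 3 else 1) * (if c 4 then a 4 else 1) * (if c 5 then a 5 else 1)
def par (c : Fin 6 → Bool) : Bool := (((((c 0).xor (c 1)).xor (c 2)).xor (c 3)).xor (c 4)).xor (c 5)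

lemma e_apply : ∀ (c : Fin 6 → Bool) (i : Fin 12), e c i = if c (bl i) then fl i else i := by
  decide

lemma e_sign : ∀ c : Fin 6 → Bool, Equiv.Perm.sign (e c) = if par c then -1 else 1 := by decide

lemma bl_fl : ∀ i, bl (fl i) = bl i := by decide
lemma fl_fl : ∀ i, fl (fl i) = i := by decide
lemma fl_ne : ∀ i, fl i ≠ i := by decide
lemma bl_block : ∀ p q : Fin 12, bl p = bl q → q = p ∨ q = fl p := by decide
lemma rr_or : ∀ i : Fin 12, i = rr (bl i) ∨ i = fl (rr (bl i)) := by decide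
lemma bl_rr : ∀ j : Fin 6, bl (rr j) = j := by decide

lemma e_mul (c d : Fin 6 → Bool) : e c * e d = e (fun j => (c j).xor (d j)) := by
  refine Equiv.ext fun i => ?_
  rw [Equiv.Perm.mul_apply, e_apply, e_apply, e_apply]
  cases hd : d (bl i) <;> cases hc : c (bl i) <;>
    simp [hd, hc, bl_fl, fl_fl]

lemma e_one : e (fun _ => false) = 1 := by decide

lemma rep (g : Equiv.Perm (Fin 12)) (hg : ∀ i, bl (g i) = bl i) :
    g = e (fun j => decide (g (rr j) ≠ rr j)) := by
  have halt : ∀ i, g i = i ∨ g i = fl i := fun i => bl_block i (g i) (hg i).symm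
  have hflip : ∀ i, g (fl i) = fl (g i) := by
    intro i
    rcases halt i with h1 | h1
    · rcases halt (fl i) with h2 | h2
      · rw [h2, h1]
      · exfalso
        apply fl_ne i
        apply g.injective
        rw [h2, fl_fl, h1]
    · rcases halt (fl i) with h2 | h2
      · exfalso
        apply fl_ne i
        apply g.injective
        rw [h2, h1]
      · rw [h2, fl_fl, h1, fl_fl]
  refine Equiv.ext fun i => ?_
  rw [e_apply]
  rcases rr_or i with hi | hi
  · rcases halt i with h | h
    · simp [← hi, h]
    · simp [← hi, h, fl_ne i]
  · set k := rr (bl i) with hk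
    rcases halt k with h | h
    · have hgi : g i = i := by rw [hi, hflip, h]
      simp [hgi, h]
    · have hgi : g i = fl i := by rw [hi, hflip, h]
      simp [hgi, h, fl_ne k]

/- the subgroup K of pairs compatible with the block map -/
def K : Subgroup (Equiv.Perm (Fin 12) × Equiv.Perm (Fin 6)) where
  carrier := {p | ∀ i, bl (p.1 i) = p.2 (bl i)}
  one_mem' := fun _ => rfl
  mul_mem' := by
    intro p q hp hq i
    show bl (p.1 (q.1 i)) = p.2 (q.2 (bl i))
    rw [hp (q.1 i), hq i]
  inv_mem' := by
    intro p hp i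
    show bl (p.1⁻¹ i) = p.2⁻¹ (bl i)
    have := hp (p.1⁻¹ i)
    rw [show p.1 (p.1⁻¹ i) = i from p.1.apply_symm_apply i] at this
    rw [this, show p.2⁻¹ (p.2 (bl (p.1⁻¹ i))) = bl (p.1⁻¹ i) from p.2.symm_apply_apply _]

lemma mem_K_iff (p : Equiv.Perm (Fin 12) × Equiv.Perm (Fin 6)) :
    p ∈ K ↔ ∀ i, bl (p.1 i) = p.2 (bl i) := Iff.rfl

lemma fin2 : ∀ i : Fin 2, i = 0 ∨ i = 1 := by decide

lemma hrx : ρ 0 (FreeGroup.of 0) = σ₀ := by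
  simp [ρ, FreeGroup.lift_apply_of, σ]
lemma hry : ρ 0 (FreeGroup.of 1) = τ := by
  simp [ρ, FreeGroup.lift_apply_of]
lemma hFx : ρF (FreeGroup.of 0) = c[0, 1, 2] := by
  simp [ρF, FreeGroup.lift_apply_of]
lemma hFy : ρF (FreeGroup.of 1) = c[0, 3] * c[1, 4] * c[2, 5] := by
  simp [ρF, FreeGroup.lift_apply_of]

lemma hK : ∀ w : FreeGroup (Fin 2), (ρ 0 w, ρF w) ∈ K := by
  intro w
  induction w using FreeGroup.induction_on with
  | C1 => simp only [map_one]; exact K.one_mem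
  | of i =>
      rcases fin2 i with rfl | rfl
      · show ((ρ 0) (FreeGroup.of 0), ρF (FreeGroup.of 0)) ∈ K
        rw [mem_K_iff, hrx, hFx]; decide
      · show ((ρ 0) (FreeGroup.of 1), ρF (FreeGroup.of 1)) ∈ K
        rw [mem_K_iff, hry, hFy]; decide
  | inv_of i h =>
      simp only [map_inv]
      exact K.inv_mem h
  | mul u v hu hv =>
      simp only [map_mul]
      exact K.mul_mem hu hv

lemma hsign : ∀ w : FreeGroup (Fin 2), Equiv.Perm.sign (ρ 0 w) = Equiv.Perm.sign (ρF w) := by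
  intro w
  induction w using FreeGroup.induction_on with
  | C1 => simp
  | of i =>
      rcases fin2 i with rfl | rfl
      · show Equiv.Perm.sign ((ρ 0) (FreeGroup.of 0)) = Equiv.Perm.sign (ρF (FreeGroup.of 0))
        rw [hrx, hFx]; decide
      · show Equiv.Perm.sign ((ρ 0) (FreeGroup.of 1)) = Equiv.Perm.sign (ρF (FreeGroup.of 1))
        rw [hry, hFy]; decide
  | inv_of i h => simp [h]
  | mul u v hu hv => simp [hu, hv]

lemma e_inj : Function.Injective e := by
  intro c d h
  funext j
  have h1 := congrArg (fun p : Equiv.Perm (Fin 12) => p (rr j)) h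
  simp only [e_apply, bl_rr] at h1
  cases hc : c j <;> cases hd : d j <;> rw [hc, hd] at h1 <;> simp at h1 <;>
    first
      | rfl
      | exact absurd h1 (fl_ne (rr j))
      | exact absurd h1.symm (fl_ne (rr j))

lemma hAa : ∀ j : Fin 6, a j ∈ A := by
  intro j
  fin_cases j <;>
    · simp only [A, Set.mem_insert_iff, Set.mem_singleton_iff]
      decide

lemma e_mem_closure : ∀ c : Fin 6 → Bool, e c ∈ Subgroup.closure A := by
  intro c
  have h1 : ∀ j : Fin 6, (if c j then a j else 1) ∈ Subgroup.closure A := by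
    intro j
    by_cases h : c j = true
    · rw [if_pos h]; exact Subgroup.subset_closure (hAa j)
    · rw [if_neg h]; exact Subgroup.one_mem _
  exact mul_mem (mul_mem (mul_mem (mul_mem (mul_mem (h1 0) (h1 1)) (h1 2)) (h1 3)) (h1 4)) (h1 5)

def Vb : Subgroup (Equiv.Perm (Fin 12)) where
  carrier := {g | ∀ i, bl (g i) = bl i}
  one_mem' := fun _ => rfl
  mul_mem' := by
    intro p q hp hq i
    show bl (p (q i)) = bl i
    rw [hp (q i), hq i]
  inv_mem' := by
    intro p hp i
    show bl (p⁻¹ i) = bl i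
    have := hp (p⁻¹ i)
    simpa using this.symm

lemma closure_block : ∀ g ∈ Subgroup.closure A, ∀ i, bl (g i) = bl i := by
  have hle : Subgroup.closure A ≤ Vb := by
    rw [Subgroup.closure_le]
    intro g hg
    rcases hg with rfl | rfl | rfl | rfl | rfl | rfl <;> intro i <;>
      revert i <;> decide
  exact fun g hg => hle hg

lemma closure_form : ∀ g ∈ Subgroup.closure A, ∃ c, g = e c :=
  fun g hg => ⟨_, rep g (closure_block g hg)⟩

def M : Subgroup (Equiv.Perm (Fin 12)) := ρF.ker.map (ρ 0)

lemma mem_M_of_word (w : FreeGroup (Fin 2)) (hw : ρF w = 1) : ρ 0 w ∈ M :=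
  ⟨w, hw, rfl⟩

def I : Fin 5 → Fin 6 → Bool :=
  ![![true,true,false,false,false,false], ![false,true,true,false,false,false],
    ![false,false,true,true,false,false], ![false,false,false,true,true,false],
    ![false,false,false,false,true,true]]

lemma G_mem : ∀ j : Fin 5, e (I j) ∈ M := by
  have h0 : e (I 0) ∈ M := by
    have := mem_M_of_word (x*x*x*y*y)
      (by simp only [map_mul, x, y, hFx, hFy]; decide)
    simpa only [map_mul, x, y, hrx, hry,
      show σ₀*σ₀*σ₀*τ*τ = e (I 0) by decide] using this
  have h1 : e (I 1) ∈ M := by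
    have := mem_M_of_word (x*y*y*x*x)
      (by simp only [map_mul, x, y, hFx, hFy]; decide)
    simpa only [map_mul, x, y, hrx, hry,
      show σ₀*τ*τ*σ₀*σ₀ = e (I 1) by decide] using this
  have h2 : e (I 2) ∈ M := by
    have := mem_M_of_word (y*x*y*y*x⁻¹*y⁻¹)
      (by simp only [map_mul, map_inv, x, y, hFx, hFy]; decide)
    simpa only [map_mul, map_inv, x, y, hrx, hry,
      show τ*σ₀*τ*τ*σ₀⁻¹*τ⁻¹ = e (I 2) by decide] using this
  have h3 : e (I 3) ∈ M := by
    have := mem_M_of_word (y*x*x*x*y)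
      (by simp only [map_mul, x, y, hFx, hFy]; decide)
    simpa only [map_mul, x, y, hrx, hry,
      show τ*σ₀*σ₀*σ₀*τ = e (I 3) by decide] using this
  have h4 : e (I 4) ∈ M := by
    have := mem_M_of_word (y*x⁻¹*y*y*x*y)
      (by simp only [map_mul, map_inv, x, y, hFx, hFy]; decide)
    simpa only [map_mul, map_inv, x, y, hrx, hry,
      show τ*σ₀⁻¹*τ*τ*σ₀*τ = e (I 4) by decide] using this
  intro j; fin_cases j <;> assumption

def D (c : Fin 6 → Bool) : Fin 5 → Bool :=
  ![c 0, (c 0).xor (c 1), ((c 0).xor (c 1)).xor (c 2), (((c 0).xor (c 1)).xor (c 2)).xor (c 3),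
    ((((c 0).xor (c 1)).xor (c 2)).xor (c 3)).xor (c 4)]

lemma e_decomp : ∀ c : Fin 6 → Bool, par c = false →
    (if D c 0 then e (I 0) else 1) * (if D c 1 then e (I 1) else 1) *
      (if D c 2 then e (I 2) else 1) * (if D c 3 then e (I 3) else 1) *
      (if D c 4 then e (I 4) else 1) = e c := by
  intro c hpar
  obtain ⟨b0, b1, b2, b3, b4, b5, rfl⟩ :
      ∃ b0 b1 b2 b3 b4 b5, c = ![b0, b1, b2, b3, b4, b5] := by
    refine ⟨c 0, c 1, c 2, c 3, c 4, c 5, ?_⟩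
    funext k; fin_cases k <;> rfl
  revert hpar
  revert b0 b1 b2 b3 b4 b5
  decide

lemma e_mem_M : ∀ c : Fin 6 → Bool, par c = false → e c ∈ M := by
  intro c hpar
  rw [← e_decomp c hpar]
  have h1 : ∀ j : Fin 5, (if D c j then e (I j) else 1) ∈ M := by
    intro j
    by_cases h : D c j = true
    · rw [if_pos h]; exact G_mem j
    · rw [if_neg h]; exact M.one_mem
  exact mul_mem (mul_mem (mul_mem (mul_mem (h1 0) (h1 1)) (h1 2)) (h1 3)) (h1 4)

lemma main_set :
    ((ρF.ker.map (ρ 0) : Subgroup (Equiv.Perm (Fin 12))) : Set (Equiv.Perm (Fin 12))) =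
      {g : Equiv.Perm (Fin 12) | g ∈ Subgroup.closure A ∧ Equiv.Perm.sign g = 1} := by
  ext g
  constructor
  · rintro ⟨w, hw, rfl⟩
    have hw1 : ρF w = 1 := hw
    have hblk : ∀ i, bl (ρ 0 w i) = bl i := by
      intro i
      have h := hK w i
      rwa [hw1] at h
    constructor
    · rw [rep (ρ 0 w) hblk]
      exact e_mem_closure _
    · rw [hsign w, hw1, map_one]
  · rintro ⟨hcl, hsgn⟩
    obtain ⟨c, rfl⟩ := closure_form g hcl
    have hpar : par c = false := by
      by_contra h
      rw [Bool.not_eq_false] at h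
      rw [e_sign, if_pos h] at hsgn
      exact absurd hsgn (by decide)
    exact e_mem_M c hpar


theorem stmt_7 :
    ((ρF.ker.map (ρ 0) : Subgroup (Equiv.Perm (Fin 12))) : Set (Equiv.Perm (Fin 12))) =
        {g : Equiv.Perm (Fin 12) | g ∈ Subgroup.closure A ∧ Equiv.Perm.sign g = 1} ∧
      Nat.card (ρF.ker.map (ρ 0)) = 32 ∧
      (∀ g ∈ ρF.ker.map (ρ 0), g ^ 2 = 1) ∧
      (∀ g ∈ ρF.ker.map (ρ 0), ∀ h ∈ ρF.ker.map (ρ 0), g * h = h * g) := by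
  have hform : ∀ g ∈ ρF.ker.map (ρ 0), ∃ c, par c = false ∧ g = e c := by
    intro g hg
    have hg' : g ∈ (↑(ρF.ker.map (ρ 0)) : Set (Equiv.Perm (Fin 12))) := hg
    rw [main_set] at hg'
    obtain ⟨c, rfl⟩ := closure_form g hg'.1
    refine ⟨c, ?_, rfl⟩
    by_contra h
    rw [Bool.not_eq_false] at h
    have hs := hg'.2
    rw [e_sign, if_pos h] at hs
    exact absurd hs (by decide)
  refine ⟨main_set, ?_, ?_, ?_⟩
  · have himg : (↑(ρF.ker.map (ρ 0)) : Set (Equiv.Perm (Fin 12)))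
        = e '' {c | par c = false} := by
      ext g
      constructor
      · intro hg
        obtain ⟨c, hc, rfl⟩ := hform g hg
        exact ⟨c, hc, rfl⟩
      · rintro ⟨c, hc, rfl⟩
        exact e_mem_M c hc
    have h1 : Nat.card (ρF.ker.map (ρ 0)) =
        (e '' {c | par c = false}).ncard := by
      rw [← himg, ← Nat.card_coe_set_eq]
      rfl
    rw [h1, Set.ncard_image_of_injective _ e_inj]
    have h2 : {c : Fin 6 → Bool | par c = false}
        = ↑(Finset.univ.filter fun c : Fin 6 → Bool => par c = false) := by
      ext c; simp
    rw [h2, Set.ncard_coe_finset]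
    decide
  · intro g hg
    obtain ⟨c, _, rfl⟩ := hform g hg
    rw [pow_two, e_mul]
    have : (fun j => (c j).xor (c j)) = fun _ : Fin 6 => false := by
      funext j; exact Bool.xor_self _
    rw [this, e_one]
  · intro g hg h hh
    obtain ⟨c, _, rfl⟩ := hform g hg
    obtain ⟨d, _, rfl⟩ := hform h hh
    rw [e_mul, e_mul]
    congr 1
    funext j
    exact Bool.xor_comm _ _
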